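/- Let E be a metric space and let F be a real normed vector space. Let A and B be two closed ℝ⁺-conic subsets of E × F. Then A +̂ B is a closed subset of E × F and is ℝ⁺-conic. -/

import Mathlib

open Filter Topology

/-- The operation `A +̂ B` of Kashiwara–Schapira (Definition 4.4):
`(p, η) ∈ A +̂ B` iff there are sequences `(xₙ, σₙ) ∈ A`, `(yₙ, τₙ) ∈ B` with
`xₙ → p`, `yₙ → p`, `σₙ + τₙ → η`, and `dist(xₙ, yₙ) ⬝ ‖σₙ‖ → 0`. -/
def hatSum {E F : Type*} [MetricSpace E] [NormedAddCommGroup F]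
    (A B : Set (E × F)) : Set (E × F) :=
  {q : E × F | ∃ (x y : ℕ → E) (σ τ : ℕ → F),
    (∀ n, (x n, σ n) ∈ A) ∧ (∀ n, (y n, τ n) ∈ B) ∧
    Tendsto x atTop (𝓝 q.1) ∧ Tendsto y atTop (𝓝 q.1) ∧
    Tendsto (fun n => σ n + τ n) atTop (𝓝 q.2) ∧
    Tendsto (fun n => dist (x n) (y n) * ‖σ n‖) atTop (𝓝 0)}

/-- Proposition 4.6.(i): if `A` and `B` are closed `ℝ⁺`-conic subsets of
`E × F`, then `A +̂ B` is closed and `ℝ⁺`-conic. -/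
theorem hatSum_isClosed_and_conic
    {E F : Type*} [MetricSpace E] [NormedAddCommGroup F] [NormedSpace ℝ F]
    (A B : Set (E × F)) (hA : IsClosed A) (hB : IsClosed B)
    (hAconic : ∀ p : E, ∀ η : F, (p, η) ∈ A → ∀ r : ℝ, 0 < r → (p, r • η) ∈ A)
    (hBconic : ∀ p : E, ∀ η : F, (p, η) ∈ B → ∀ r : ℝ, 0 < r → (p, r • η) ∈ B) :
    IsClosed (hatSum A B) ∧
      (∀ p : E, ∀ η : F, (p, η) ∈ hatSum A B → ∀ r : ℝ, 0 < r →
        (p, r • η) ∈ hatSum A B) := by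
  constructor
  · -- closedness via sequential closedness
    apply IsSeqClosed.isClosed
    intro u q hu huq
    have key : ∀ k : ℕ, ∃ (a b : E) (s t : F),
        (a, s) ∈ A ∧ (b, t) ∈ B ∧ dist a (u k).1 < 1 / (k + 1) ∧
        dist b (u k).1 < 1 / (k + 1) ∧ dist (s + t) (u k).2 < 1 / (k + 1) ∧
        dist a b * ‖s‖ < 1 / (k + 1) := by
      intro k
      obtain ⟨x, y, σ, τ, hxA, hyB, hx, hy, hστ, hd⟩ := hu k
      have hk : (0 : ℝ) < 1 / (k + 1) := by positivity
      have h1 := (tendsto_iff_dist_tendsto_zero.1 hx).eventually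
        (eventually_lt_nhds hk)
      have h2 := (tendsto_iff_dist_tendsto_zero.1 hy).eventually
        (eventually_lt_nhds hk)
      have h3 := (tendsto_iff_dist_tendsto_zero.1 hστ).eventually
        (eventually_lt_nhds hk)
      have h4 := hd.eventually (eventually_lt_nhds hk)
      obtain ⟨n, ⟨⟨hn1, hn2⟩, hn3⟩, hn4⟩ := (((h1.and h2).and h3).and h4).exists
      exact ⟨x n, y n, σ n, τ n, hxA n, hyB n, hn1, hn2, hn3, hn4⟩
    choose a b s t haA hbB ha hb hst hds using key
    have hlim : Tendsto (fun k : ℕ => 1 / ((k : ℝ) + 1)) atTop (𝓝 0) :=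
      tendsto_one_div_add_atTop_nhds_zero_nat
    have hu1 : Tendsto (fun k => (u k).1) atTop (𝓝 q.1) :=
      (continuous_fst.tendsto q).comp huq
    have hu2 : Tendsto (fun k => (u k).2) atTop (𝓝 q.2) :=
      (continuous_snd.tendsto q).comp huq
    have hdu1 := tendsto_iff_dist_tendsto_zero.1 hu1
    have hdu2 := tendsto_iff_dist_tendsto_zero.1 hu2
    have hbound : Tendsto (fun k : ℕ => 1 / ((k : ℝ) + 1) + dist ((u k).1) q.1)
        atTop (𝓝 0) := by simpa using hlim.add hdu1
    have hbound2 : Tendsto (fun k : ℕ => 1 / ((k : ℝ) + 1) + dist ((u k).2) q.2)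
        atTop (𝓝 0) := by simpa using hlim.add hdu2
    refine ⟨a, b, s, t, haA, hbB, ?_, ?_, ?_, ?_⟩
    · rw [tendsto_iff_dist_tendsto_zero]
      refine squeeze_zero (fun k => dist_nonneg) (fun k => ?_) hbound
      exact (dist_triangle (a k) ((u k).1) q.1).trans
        (add_le_add_left (ha k).le _)
    · rw [tendsto_iff_dist_tendsto_zero]
      refine squeeze_zero (fun k => dist_nonneg) (fun k => ?_) hbound
      exact (dist_triangle (b k) ((u k).1) q.1).trans
        (add_le_add_left (hb k).le _)
    · rw [tendsto_iff_dist_tendsto_zero]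
      refine squeeze_zero (fun k => dist_nonneg) (fun k => ?_) hbound2
      exact (dist_triangle (s k + t k) ((u k).2) q.2).trans
        (add_le_add_left (hst k).le _)
    · refine squeeze_zero (fun k => by positivity) (fun k => (hds k).le) hlim
  · -- conic
    rintro p η ⟨x, y, σ, τ, hxA, hyB, hx, hy, hστ, hd⟩ r hr
    refine ⟨x, y, fun n => r • σ n, fun n => r • τ n,
      fun n => hAconic _ _ (hxA n) r hr, fun n => hBconic _ _ (hyB n) r hr,
      hx, hy, ?_, ?_⟩
    · have : Tendsto (fun n => r • (σ n + τ n)) atTop (𝓝 (r • η)) :=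
        hστ.const_smul r
      simpa [smul_add] using this
    · have : Tendsto (fun n => r * (dist (x n) (y n) * ‖σ n‖)) atTop (𝓝 (r * 0)) :=
        hd.const_mul r
      simp only [mul_zero] at this
      refine this.congr fun n => ?_
      rw [norm_smul, Real.norm_eq_abs, abs_of_pos hr]; ring
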